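/- Under the assumptions of the previous statement (Hessian entries of log π bounded by M, refreshment rates γ_i > 0 with sum Γ), the velocity-switch transition probability Q(v'|x,v) = λ_{i}(x,v)/Λ(x,v), for v' = F_i(v) obtained by flipping the i-th coordinate of v, satisfies |Q(v'|x,v) − Q(v'|x',v)| ≤ 2 Γ^{−1} M d^{3/2} ‖x − x'‖_2 for all x, x' ∈ ℝ^d. -/

import Mathlib

open MeasureTheory


lemma partial_lipschitz {d : ℕ} (f : EuclideanSpace ℝ (Fin d) → ℝ)
    (hf : ContDiff ℝ 2 f) (M : ℝ) (hM0 : 0 ≤ M) (i : Fin d)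
    (hM : ∀ (x : EuclideanSpace ℝ (Fin d)) (j : Fin d),
      |fderiv ℝ (fun y => fderiv ℝ f y (EuclideanSpace.single i (1:ℝ))) x
        (EuclideanSpace.single j (1:ℝ))| ≤ M)
    (x x' : EuclideanSpace ℝ (Fin d)) :
    |fderiv ℝ f x (EuclideanSpace.single i (1:ℝ)) - fderiv ℝ f x' (EuclideanSpace.single i (1:ℝ))|
      ≤ M * Real.sqrt d * ‖x - x'‖ := by
  set h : EuclideanSpace ℝ (Fin d) → ℝ :=
    fun y => fderiv ℝ f y (EuclideanSpace.single i (1:ℝ)) with hh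
  have hdiff : Differentiable ℝ h := by
    have h1 : ContDiff ℝ 1 (fderiv ℝ f) := hf.fderiv_right (by norm_num)
    exact (h1.differentiable one_ne_zero).clm_apply (differentiable_const _)
  have hbound : ∀ y, ‖fderiv ℝ h y‖ ≤ M * Real.sqrt d := by
    intro y
    apply ContinuousLinearMap.opNorm_le_bound _ (by positivity)
    intro u
    have hu : u = ∑ j, u j • EuclideanSpace.single j (1:ℝ) := by
      ext k
      rw [show ((∑ j, u j • EuclideanSpace.single j (1:ℝ)) k) = ∑ j, (u j • EuclideanSpace.single j (1:ℝ)) k by rw [WithLp.ofLp_sum, Finset.sum_apply]]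
      simp [EuclideanSpace.single_apply]
    calc ‖fderiv ℝ h y u‖ = |∑ j, u j * fderiv ℝ h y (EuclideanSpace.single j (1:ℝ))| := by
          conv_lhs => rw [hu]
          rw [map_sum]
          simp [Real.norm_eq_abs]
      _ ≤ ∑ j, |u j * fderiv ℝ h y (EuclideanSpace.single j (1:ℝ))| :=
          Finset.abs_sum_le_sum_abs _ _
      _ ≤ ∑ j, |u j| * M := by
          apply Finset.sum_le_sum
          intro j _
          rw [abs_mul]
          exact mul_le_mul_of_nonneg_left (hM y j) (abs_nonneg _)
      _ = M * ∑ j, |u j| := by rw [← Finset.sum_mul]; ring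
      _ ≤ M * (Real.sqrt d * ‖u‖) := by
          apply mul_le_mul_of_nonneg_left _ hM0
          have hcs : (∑ j, |u j|) ^ 2 ≤ d * ∑ j, |u j| ^ 2 := by
            simpa using sq_sum_le_card_mul_sum_sq (s := Finset.univ) (f := fun j => |u j|)
          have hnorm : ‖u‖ = Real.sqrt (∑ j, |u j| ^ 2) := by
            rw [EuclideanSpace.norm_eq]; simp [Real.norm_eq_abs]
          have h1 : (∑ j, |u j|) ^ 2 ≤ (Real.sqrt d * ‖u‖) ^ 2 := by
            rw [mul_pow, hnorm, Real.sq_sqrt (by positivity), Real.sq_sqrt (by positivity)]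
            exact hcs
          have h2 : (0:ℝ) ≤ Real.sqrt d * ‖u‖ := by positivity
          nlinarith [Finset.sum_nonneg (fun j (_ : j ∈ Finset.univ) => abs_nonneg (u j))]
      _ = M * Real.sqrt d * ‖u‖ := by ring
  have := Convex.norm_image_sub_le_of_norm_fderiv_le (f := h)
    (fun y _ => hdiff y) (fun y _ => hbound y) convex_univ
    (Set.mem_univ x') (Set.mem_univ x)
  simpa [Real.norm_eq_abs] using this


/-- **Lemma 2: Lipschitz bound on the velocity-switch transition probabilities.**
Under the Hessian bound `M` on `log π` and refreshment rates `γ i > 0` summing to `Γ`,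
the transition probability `Q(F_i v | x, v) = lam i x / Λ x` satisfies
`|Q(v'|x,v) - Q(v'|x',v)| ≤ 2 Γ⁻¹ M d^{3/2} ‖x - x'‖₂`. -/
theorem jump_kernel_lipschitz {d : ℕ}
    (π : EuclideanSpace ℝ (Fin d) → ℝ) (hπpos : ∀ x, 0 < π x)
    (hsmooth : ContDiff ℝ 2 (fun x => Real.log (π x)))
    (M : ℝ)
    (hM : ∀ (x : EuclideanSpace ℝ (Fin d)) (i j : Fin d),
      |fderiv ℝ (fun y => fderiv ℝ (fun z => Real.log (π z)) y
          (EuclideanSpace.single i (1:ℝ))) x (EuclideanSpace.single j (1:ℝ))| ≤ M)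
    (v : Fin d → ℝ) (hv : ∀ i, v i = 1 ∨ v i = -1)
    (γ : Fin d → ℝ) (hγ : ∀ i, 0 < γ i)
    (Γ : ℝ) (hΓ : Γ = ∑ i, γ i)
    (lam : Fin d → EuclideanSpace ℝ (Fin d) → ℝ)
    (hlam : ∀ i x, lam i x =
      max 0 (-(v i) * fderiv ℝ (fun z => Real.log (π z)) x (EuclideanSpace.single i (1:ℝ)))
        + γ i)
    (Λ : EuclideanSpace ℝ (Fin d) → ℝ) (hΛ : ∀ x, Λ x = ∑ i, lam i x)
    (i : Fin d)
    (Q : EuclideanSpace ℝ (Fin d) → ℝ) (hQ : ∀ x, Q x = lam i x / Λ x)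
    (x x' : EuclideanSpace ℝ (Fin d)) :
    |Q x - Q x'| ≤ 2 * Γ⁻¹ * M * (d : ℝ) ^ ((3:ℝ)/2) * ‖x - x'‖ := by
  have hd : 0 < d := i.pos
  have hM0 : 0 ≤ M := le_trans (abs_nonneg _) (hM x i i)
  have hΓpos : 0 < Γ := by
    rw [hΓ]
    exact Finset.sum_pos (fun j _ => hγ j) ⟨i, Finset.mem_univ i⟩
  set L : ℝ := M * Real.sqrt d * ‖x - x'‖ with hL
  have hL0 : 0 ≤ L := by positivity
  have key : ∀ j : Fin d, |lam j x - lam j x'| ≤ L := by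
    intro j
    have hlip := partial_lipschitz (fun z => Real.log (π z)) hsmooth M hM0 j
      (fun y k => hM y j k) x x'
    have habs : |v j| = 1 := by rcases hv j with h | h <;> simp [h]
    rw [hlam, hlam]
    have : max 0 (-(v j) * fderiv ℝ (fun z => Real.log (π z)) x (EuclideanSpace.single j (1:ℝ)))
        + γ j - (max 0 (-(v j) * fderiv ℝ (fun z => Real.log (π z)) x' (EuclideanSpace.single j (1:ℝ))) + γ j)
        = max (-(v j) * fderiv ℝ (fun z => Real.log (π z)) x (EuclideanSpace.single j (1:ℝ))) 0
          - max (-(v j) * fderiv ℝ (fun z => Real.log (π z)) x' (EuclideanSpace.single j (1:ℝ))) 0 := by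
      rw [max_comm, max_comm 0]; ring
    rw [this]
    calc |_| ≤ |(-(v j) * fderiv ℝ (fun z => Real.log (π z)) x (EuclideanSpace.single j (1:ℝ)))
          - (-(v j) * fderiv ℝ (fun z => Real.log (π z)) x' (EuclideanSpace.single j (1:ℝ)))| :=
            abs_max_sub_max_le_abs _ _ _
      _ = |v j| * |fderiv ℝ (fun z => Real.log (π z)) x (EuclideanSpace.single j (1:ℝ))
          - fderiv ℝ (fun z => Real.log (π z)) x' (EuclideanSpace.single j (1:ℝ))| := by
            rw [← abs_mul, ← abs_neg]; congr 1; ring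
      _ ≤ L := by rw [habs, one_mul]; exact hlip
  have hlam_nonneg : ∀ j y, 0 ≤ lam j y := by
    intro j y
    rw [hlam]
    have := le_max_left (0:ℝ) (-(v j) * fderiv ℝ (fun z => Real.log (π z)) y (EuclideanSpace.single j (1:ℝ)))
    linarith [hγ j]
  have hΛlow : ∀ y, Γ ≤ Λ y := by
    intro y
    rw [hΛ, hΓ]
    apply Finset.sum_le_sum
    intro j _
    rw [hlam]
    have := le_max_left (0:ℝ) (-(v j) * fderiv ℝ (fun z => Real.log (π z)) y (EuclideanSpace.single j (1:ℝ)))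
    linarith
  have hΛdiff : |Λ x - Λ x'| ≤ d * L := by
    rw [hΛ, hΛ, ← Finset.sum_sub_distrib]
    calc |∑ j, (lam j x - lam j x')| ≤ ∑ j, |lam j x - lam j x'| := Finset.abs_sum_le_sum_abs _ _
      _ ≤ ∑ _j : Fin d, L := Finset.sum_le_sum (fun j _ => key j)
      _ = d * L := by simp [mul_comm]
  -- quotient bound
  set a := lam i x
  set b := lam i x'
  set A := Λ x
  set B := Λ x'
  have hA : Γ ≤ A := hΛlow x
  have hB : Γ ≤ B := hΛlow x'
  have hb0 : 0 ≤ b := hlam_nonneg i x'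
  have hbB : b ≤ B := by
    show lam i x' ≤ Λ x'
    rw [hΛ]
    exact Finset.single_le_sum (fun j _ => hlam_nonneg j x') (Finset.mem_univ i)
  have hApos : 0 < A := lt_of_lt_of_le hΓpos hA
  have hBpos : 0 < B := lt_of_lt_of_le hΓpos hB
  have hquot : |Q x - Q x'| ≤ (|a - b| + |A - B|) / Γ := by
    rw [hQ, hQ]
    rw [div_sub_div _ _ (ne_of_gt hApos) (ne_of_gt hBpos), abs_div, abs_of_pos (mul_pos hApos hBpos)]
    rw [div_le_div_iff₀ (mul_pos hApos hBpos) hΓpos]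
    have h1 : |a * B - A * b| ≤ |a - b| * B + b * |A - B| := by
      have heq : a * B - A * b = (a - b) * B + b * (B - A) := by ring
      rw [heq]
      calc |(a - b) * B + b * (B - A)| ≤ |(a - b) * B| + |b * (B - A)| := abs_add_le _ _
        _ = |a - b| * B + b * |A - B| := by
            rw [abs_mul, abs_mul, abs_of_pos hBpos, abs_of_nonneg hb0, abs_sub_comm B A]
    have h2 : (|a - b| * B + b * |A - B|) * Γ ≤ (|a - b| + |A - B|) * (A * B) := by
      nlinarith [abs_nonneg (a - b), abs_nonneg (A - B),
        mul_le_mul_of_nonneg_left hA (mul_nonneg (abs_nonneg (a - b)) hBpos.le),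
        mul_le_mul_of_nonneg_left (mul_le_mul hbB hA hΓpos.le hBpos.le) (abs_nonneg (A - B))]
    show |a * B - A * b| * Γ ≤ (|a - b| + |A - B|) * (A * B)
    calc |a * B - A * b| * Γ ≤ (|a - b| * B + b * |A - B|) * Γ :=
          mul_le_mul_of_nonneg_right h1 (le_of_lt hΓpos)
      _ ≤ (|a - b| + |A - B|) * (A * B) := h2
  have hpow : (d : ℝ) ^ ((3:ℝ)/2) = d * Real.sqrt d := by
    rw [show (3:ℝ)/2 = 1 + 1/2 by norm_num, Real.rpow_add (by exact_mod_cast hd), Real.rpow_one,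
      ← Real.sqrt_eq_rpow]
  calc |Q x - Q x'| ≤ (|a - b| + |A - B|) / Γ := hquot
    _ ≤ (L + ↑d * L) / Γ :=
        (div_le_div_iff_of_pos_right hΓpos).mpr (add_le_add (key i) hΛdiff)
    _ ≤ 2 * Γ⁻¹ * M * (d : ℝ) ^ ((3:ℝ)/2) * ‖x - x'‖ := by
        rw [hpow, hL]
        rw [div_le_iff₀ hΓpos]
        have hd1 : (1:ℝ) ≤ d := by exact_mod_cast hd
        have h2 : M * Real.sqrt d * ‖x - x'‖ + d * (M * Real.sqrt d * ‖x - x'‖)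
            ≤ 2 * M * (d * Real.sqrt d) * ‖x - x'‖ := by
          nlinarith [Real.sqrt_nonneg (d:ℝ), norm_nonneg (x - x'), mul_nonneg hM0 (Real.sqrt_nonneg (d:ℝ))]
        calc M * Real.sqrt d * ‖x - x'‖ + d * (M * Real.sqrt d * ‖x - x'‖)
            ≤ 2 * M * (d * Real.sqrt d) * ‖x - x'‖ := h2
          _ = 2 * Γ⁻¹ * M * (↑d * Real.sqrt d) * ‖x - x'‖ * Γ := by
              field_simp
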